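/- For every s ≥ 3, the sum over quadruples 1 ≤ j_1 < j_2 < j_3 < j_4 ≤ s of Π_{p=1}^{4} (2j_p - p)!!/(2j_p - (p+1))!! equals (s-1)(s-2)(s-3)(80 s^3 - 120 s^2 + 7 s + 12)/2430. -/

import Mathlib

open Nat

namespace SimplexBulk

noncomputable def F1 (j : ℕ) : ℚ := ((2 * j - 1)‼ : ℚ) / ((2 * j - 2)‼ : ℚ)
noncomputable def F2 (j : ℕ) : ℚ := ((2 * j - 2)‼ : ℚ) / ((2 * j - 3)‼ : ℚ)
noncomputable def F3 (j : ℕ) : ℚ := ((2 * j - 3)‼ : ℚ) / ((2 * j - 4)‼ : ℚ)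
noncomputable def F4 (j : ℕ) : ℚ := ((2 * j - 4)‼ : ℚ) / ((2 * j - 5)‼ : ℚ)

lemma df_ne (n : ℕ) : ((n‼ : ℚ)) ≠ 0 := by
  exact_mod_cast (Nat.doubleFactorial_pos n).ne'

lemma sum_Icc_top {a b : ℕ} (h : a ≤ b + 1) (f : ℕ → ℚ) :
    ∑ j ∈ Finset.Icc a (b + 1), f j = (∑ j ∈ Finset.Icc a b, f j) + f (b + 1) := by
  rw [← Finset.insert_Icc_right_eq_Icc_add_one h, Finset.sum_insert (by simp)]
  ring

lemma F1_succ (n : ℕ) (hn : 1 ≤ n) :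
    F1 (n + 1) = (2 * (n : ℚ) + 1) / (2 * n) * F1 n := by
  have h1 : 2 * (n + 1) - 1 = (2 * n - 1) + 2 := by omega
  have h2 : 2 * (n + 1) - 2 = (2 * n - 2) + 2 := by omega
  have h3 : 2 * n - 1 + 2 = 2 * n + 1 := by omega
  have h4 : 2 * n - 2 + 2 = 2 * n := by omega
  have h3' : ((2 * n - 1 : ℕ) : ℚ) = 2 * (n : ℚ) - 1 := by
    have h : (1 : ℕ) ≤ 2 * n := by omega
    push_cast [h]; ring
  have h4' : ((2 * n - 2 : ℕ) : ℚ) = 2 * (n : ℚ) - 2 := by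
    have h : (2 : ℕ) ≤ 2 * n := by omega
    push_cast [h]; ring
  rw [F1, F1, h1, h2, Nat.doubleFactorial_add_two, Nat.doubleFactorial_add_two]
  push_cast
  rw [h3', h4', show (2 * (n : ℚ) - 1 + 2) = 2 * (n : ℚ) + 1 from by ring,
    show (2 * (n : ℚ) - 2 + 2) = 2 * (n : ℚ) from by ring, mul_div_mul_comm]

lemma F3_succ (n : ℕ) (hn : 2 ≤ n) :
    F3 (n + 1) = (2 * (n : ℚ) - 1) / (2 * n - 2) * F3 n := by
  have h1 : 2 * (n + 1) - 3 = (2 * n - 3) + 2 := by omega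
  have h2 : 2 * (n + 1) - 4 = (2 * n - 4) + 2 := by omega
  have h3 : ((2 * n - 3 : ℕ) : ℚ) = 2 * (n : ℚ) - 3 := by
    have h : (3 : ℕ) ≤ 2 * n := by omega
    push_cast [h]; ring
  have h4 : ((2 * n - 4 : ℕ) : ℚ) = 2 * (n : ℚ) - 4 := by
    have h : (4 : ℕ) ≤ 2 * n := by omega
    push_cast [h]; ring
  rw [F3, F3, h1, h2, Nat.doubleFactorial_add_two, Nat.doubleFactorial_add_two]
  push_cast
  rw [h3, h4, show (2 * (n : ℚ) - 3 + 2) = 2 * (n : ℚ) - 1 from by ring,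
    show (2 * (n : ℚ) - 4 + 2) = 2 * (n : ℚ) - 2 from by ring, mul_div_mul_comm]

/-- `F1 s * F2 (s+1) = 2s` for `s ≥ 1`. -/
lemma key12 (s : ℕ) (hs : 1 ≤ s) : F1 s * F2 (s + 1) = 2 * (s : ℚ) := by
  have h1 : 2 * (s + 1) - 2 = (2 * s - 2) + 2 := by omega
  have h2 : 2 * (s + 1) - 3 = 2 * s - 1 := by omega
  have h3 : ((2 * s - 2 : ℕ) : ℚ) = 2 * (s : ℚ) - 2 := by
    have h : (2 : ℕ) ≤ 2 * s := by omega
    push_cast [h]; ring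
  rw [F1, F2, h1, h2, Nat.doubleFactorial_add_two]
  push_cast
  rw [h3, show (2 * (s : ℚ) - 2 + 2) = 2 * (s : ℚ) from by ring]
  have hn1 := df_ne (2 * s - 1)
  have hn2 := df_ne (2 * s - 2)
  field_simp

/-- `F3 s * F4 (s+1) = 2s - 2` for `s ≥ 2`. -/
lemma key34 (s : ℕ) (hs : 2 ≤ s) : F3 s * F4 (s + 1) = 2 * (s : ℚ) - 2 := by
  have h1 : 2 * (s + 1) - 4 = (2 * s - 4) + 2 := by omega
  have h2 : 2 * (s + 1) - 5 = 2 * s - 3 := by omega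
  have h3 : ((2 * s - 4 : ℕ) : ℚ) = 2 * (s : ℚ) - 4 := by
    have h : (4 : ℕ) ≤ 2 * s := by omega
    push_cast [h]; ring
  rw [F3, F4, h1, h2, Nat.doubleFactorial_add_two]
  push_cast
  rw [h3, show (2 * (s : ℚ) - 4 + 2) = 2 * (s : ℚ) - 2 from by ring]
  have hn1 := df_ne (2 * s - 3)
  have hn2 := df_ne (2 * s - 4)
  field_simp

/-- Level-1 sum. -/
lemma L1 (s : ℕ) (hs : 1 ≤ s) :
    ∑ j ∈ Finset.Icc 1 s, F1 j = (2 * (s : ℚ) + 1) / 3 * F1 s := by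
  induction s with
  | zero => omega
  | succ n ih =>
    rcases Nat.eq_or_lt_of_le hs with h | h
    · -- n + 1 = 1
      have hn : n = 0 := by omega
      subst hn
      norm_num [F1, Nat.doubleFactorial]
    · have hn : 1 ≤ n := by omega
      rw [sum_Icc_top (by omega), ih hn, F1_succ n hn]
      have hnn : (n : ℚ) ≠ 0 := Nat.cast_ne_zero.mpr (by omega)
      push_cast
      field_simp
      ring

/-- Level-2 sum. -/
lemma L2 (s : ℕ) :
    ∑ j1 ∈ Finset.Icc 1 s, ∑ j2 ∈ Finset.Icc (j1 + 1) s, F1 j1 * F2 j2 =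
      (4 * (s : ℚ) ^ 3 - 3 * (s : ℚ) ^ 2 - (s : ℚ)) / 9 := by
  induction s with
  | zero => simp
  | succ n ih =>
    have split : ∑ j1 ∈ Finset.Icc 1 (n + 1), ∑ j2 ∈ Finset.Icc (j1 + 1) (n + 1), F1 j1 * F2 j2
        = (∑ j1 ∈ Finset.Icc 1 n, ∑ j2 ∈ Finset.Icc (j1 + 1) n, F1 j1 * F2 j2)
          + (∑ j1 ∈ Finset.Icc 1 n, F1 j1) * F2 (n + 1) := by
      rw [sum_Icc_top (show 1 ≤ n + 1 by omega),
        Finset.Icc_eq_empty (show ¬(n + 1 + 1) ≤ n + 1 by omega), Finset.sum_empty,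
        add_zero, Finset.sum_mul, ← Finset.sum_add_distrib]
      exact Finset.sum_congr rfl fun j1 hj1 => by
        have hm := Finset.mem_Icc.mp hj1
        rw [sum_Icc_top (show j1 + 1 ≤ n + 1 by omega)]
    rw [split, ih]
    rcases Nat.eq_zero_or_pos n with hn | hn
    · subst hn; norm_num [F1, F2, Nat.doubleFactorial]
    · rw [L1 n hn, mul_assoc, key12 n hn]
      push_cast
      field_simp
      ring

/-- Level-3 sum. -/
lemma L3 (s : ℕ) (hs : 2 ≤ s) :
    ∑ j1 ∈ Finset.Icc 1 s, ∑ j2 ∈ Finset.Icc (j1 + 1) s, ∑ j3 ∈ Finset.Icc (j2 + 1) s,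
        F1 j1 * F2 j2 * F3 j3 =
      (40 * (s : ℚ) ^ 4 - 110 * (s : ℚ) ^ 3 + 59 * (s : ℚ) ^ 2 + 5 * (s : ℚ) - 6) / 405
        * F3 s := by
  induction s with
  | zero => omega
  | succ n ih =>
    rcases Nat.eq_or_lt_of_le hs with h | h
    · -- n + 1 = 2
      have hn : n = 1 := by omega
      subst hn
      have hz : ∑ j1 ∈ Finset.Icc 1 2, ∑ j2 ∈ Finset.Icc (j1 + 1) 2,
          ∑ j3 ∈ Finset.Icc (j2 + 1) 2, F1 j1 * F2 j2 * F3 j3 = 0 := by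
        refine Finset.sum_eq_zero fun j1 h1 => Finset.sum_eq_zero fun j2 h2 => ?_
        have hm1 := Finset.mem_Icc.mp h1
        have hm2 := Finset.mem_Icc.mp h2
        rw [Finset.Icc_eq_empty (by omega), Finset.sum_empty]
      rw [hz]
      norm_num
    · have hn : 2 ≤ n := by omega
      have split : ∑ j1 ∈ Finset.Icc 1 (n + 1), ∑ j2 ∈ Finset.Icc (j1 + 1) (n + 1),
            ∑ j3 ∈ Finset.Icc (j2 + 1) (n + 1), F1 j1 * F2 j2 * F3 j3
          = (∑ j1 ∈ Finset.Icc 1 n, ∑ j2 ∈ Finset.Icc (j1 + 1) n,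
              ∑ j3 ∈ Finset.Icc (j2 + 1) n, F1 j1 * F2 j2 * F3 j3)
            + (∑ j1 ∈ Finset.Icc 1 n, ∑ j2 ∈ Finset.Icc (j1 + 1) n, F1 j1 * F2 j2)
              * F3 (n + 1) := by
        rw [sum_Icc_top (show 1 ≤ n + 1 by omega),
          Finset.Icc_eq_empty (show ¬(n + 1 + 1) ≤ n + 1 by omega), Finset.sum_empty,
          add_zero, Finset.sum_mul, ← Finset.sum_add_distrib]
        refine Finset.sum_congr rfl fun j1 hj1 => ?_
        have hm1 := Finset.mem_Icc.mp hj1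
        rw [sum_Icc_top (show j1 + 1 ≤ n + 1 by omega),
          Finset.Icc_eq_empty (show ¬(n + 1 + 1) ≤ n + 1 by omega), Finset.sum_empty,
          add_zero, Finset.sum_mul, ← Finset.sum_add_distrib]
        exact Finset.sum_congr rfl fun j2 hj2 => by
          have hm2 := Finset.mem_Icc.mp hj2
          rw [sum_Icc_top (show j2 + 1 ≤ n + 1 by omega)]
      rw [split, ih hn, L2 n, F3_succ n hn]
      have hq : (2 : ℚ) ≤ (n : ℚ) := by exact_mod_cast hn
      have hnn : (2 * (n : ℚ) - 2) ≠ 0 := by nlinarith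
      have hcoef : (40 * (n : ℚ) ^ 4 - 110 * (n : ℚ) ^ 3 + 59 * (n : ℚ) ^ 2 + 5 * (n : ℚ) - 6)
            / 405
          + (4 * (n : ℚ) ^ 3 - 3 * (n : ℚ) ^ 2 - (n : ℚ)) / 9
            * ((2 * (n : ℚ) - 1) / (2 * (n : ℚ) - 2))
          = (40 * ((n : ℚ) + 1) ^ 4 - 110 * ((n : ℚ) + 1) ^ 3 + 59 * ((n : ℚ) + 1) ^ 2
              + 5 * ((n : ℚ) + 1) - 6) / 405
            * ((2 * (n : ℚ) - 1) / (2 * (n : ℚ) - 2)) := by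
        have hn1 : (n : ℚ) - 1 ≠ 0 := by linarith
        field_simp
        ring
      push_cast
      linear_combination F3 n * hcoef

end SimplexBulk

/-- Sum over the bulk of a 4-dimensional simplex:
`Σ_{1≤j₁<j₂<j₃<j₄≤s} Π_{p=1}^{4} (2j_p - p)!!/(2j_p - (p+1))!!
  = (s-1)(s-2)(s-3)(80s³ - 120s² + 7s + 12)/2430`. -/
theorem simplex_bulk_four (s : ℕ) (hs : 3 ≤ s) :
    ∑ j1 ∈ Finset.Icc 1 s, ∑ j2 ∈ Finset.Icc (j1 + 1) s,
      ∑ j3 ∈ Finset.Icc (j2 + 1) s, ∑ j4 ∈ Finset.Icc (j3 + 1) s,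
        (((2 * j1 - 1)‼ : ℚ) / ((2 * j1 - 2)‼ : ℚ)) *
          (((2 * j2 - 2)‼ : ℚ) / ((2 * j2 - 3)‼ : ℚ)) *
          (((2 * j3 - 3)‼ : ℚ) / ((2 * j3 - 4)‼ : ℚ)) *
          (((2 * j4 - 4)‼ : ℚ) / ((2 * j4 - 5)‼ : ℚ)) =
      ((s : ℚ) - 1) * ((s : ℚ) - 2) * ((s : ℚ) - 3) *
        (80 * (s : ℚ) ^ 3 - 120 * (s : ℚ) ^ 2 + 7 * (s : ℚ) + 12) / 2430 := by
  show ∑ j1 ∈ Finset.Icc 1 s, ∑ j2 ∈ Finset.Icc (j1 + 1) s,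
      ∑ j3 ∈ Finset.Icc (j2 + 1) s, ∑ j4 ∈ Finset.Icc (j3 + 1) s,
        SimplexBulk.F1 j1 * SimplexBulk.F2 j2 * SimplexBulk.F3 j3 * SimplexBulk.F4 j4 = _
  induction s with
  | zero => omega
  | succ n ih =>
    rcases Nat.eq_or_lt_of_le hs with h | h
    · -- n + 1 = 3
      have hn : n = 2 := by omega
      subst hn
      have hz : ∑ j1 ∈ Finset.Icc 1 3, ∑ j2 ∈ Finset.Icc (j1 + 1) 3,
          ∑ j3 ∈ Finset.Icc (j2 + 1) 3, ∑ j4 ∈ Finset.Icc (j3 + 1) 3,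
          SimplexBulk.F1 j1 * SimplexBulk.F2 j2 * SimplexBulk.F3 j3 * SimplexBulk.F4 j4
          = 0 := by
        refine Finset.sum_eq_zero fun j1 h1 => Finset.sum_eq_zero fun j2 h2 =>
          Finset.sum_eq_zero fun j3 h3 => ?_
        have hm1 := Finset.mem_Icc.mp h1
        have hm2 := Finset.mem_Icc.mp h2
        have hm3 := Finset.mem_Icc.mp h3
        rw [Finset.Icc_eq_empty (by omega), Finset.sum_empty]
      rw [hz]
      norm_num
    · have hn : 3 ≤ n := by omega
      have split : ∑ j1 ∈ Finset.Icc 1 (n + 1), ∑ j2 ∈ Finset.Icc (j1 + 1) (n + 1),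
            ∑ j3 ∈ Finset.Icc (j2 + 1) (n + 1), ∑ j4 ∈ Finset.Icc (j3 + 1) (n + 1),
            SimplexBulk.F1 j1 * SimplexBulk.F2 j2 * SimplexBulk.F3 j3 * SimplexBulk.F4 j4
          = (∑ j1 ∈ Finset.Icc 1 n, ∑ j2 ∈ Finset.Icc (j1 + 1) n,
              ∑ j3 ∈ Finset.Icc (j2 + 1) n, ∑ j4 ∈ Finset.Icc (j3 + 1) n,
              SimplexBulk.F1 j1 * SimplexBulk.F2 j2 * SimplexBulk.F3 j3 * SimplexBulk.F4 j4)
            + (∑ j1 ∈ Finset.Icc 1 n, ∑ j2 ∈ Finset.Icc (j1 + 1) n,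
                ∑ j3 ∈ Finset.Icc (j2 + 1) n,
                SimplexBulk.F1 j1 * SimplexBulk.F2 j2 * SimplexBulk.F3 j3)
              * SimplexBulk.F4 (n + 1) := by
        rw [SimplexBulk.sum_Icc_top (show 1 ≤ n + 1 by omega),
          Finset.Icc_eq_empty (show ¬(n + 1 + 1) ≤ n + 1 by omega), Finset.sum_empty,
          add_zero, Finset.sum_mul, ← Finset.sum_add_distrib]
        refine Finset.sum_congr rfl fun j1 hj1 => ?_
        have hm1 := Finset.mem_Icc.mp hj1
        rw [SimplexBulk.sum_Icc_top (show j1 + 1 ≤ n + 1 by omega),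
          Finset.Icc_eq_empty (show ¬(n + 1 + 1) ≤ n + 1 by omega), Finset.sum_empty,
          add_zero, Finset.sum_mul, ← Finset.sum_add_distrib]
        refine Finset.sum_congr rfl fun j2 hj2 => ?_
        have hm2 := Finset.mem_Icc.mp hj2
        rw [SimplexBulk.sum_Icc_top (show j2 + 1 ≤ n + 1 by omega),
          Finset.Icc_eq_empty (show ¬(n + 1 + 1) ≤ n + 1 by omega), Finset.sum_empty,
          add_zero, Finset.sum_mul, ← Finset.sum_add_distrib]
        exact Finset.sum_congr rfl fun j3 hj3 => by
          have hm3 := Finset.mem_Icc.mp hj3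
          rw [SimplexBulk.sum_Icc_top (show j3 + 1 ≤ n + 1 by omega)]
      rw [split, ih (by omega), SimplexBulk.L3 n (by omega),
        mul_assoc _ (SimplexBulk.F3 n) (SimplexBulk.F4 (n + 1)),
        SimplexBulk.key34 n (by omega)]
      push_cast
      field_simp
      ring
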